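/- Let R be a commutative ring equipped with an involutive ring automorphism r ↦ r̄, let n, k ≥ 1, let A_0,…,A_{k−1} be n×n matrices over R, let λ ∈ R satisfy λ·λ̄ = 1, and let X = circ_λ(A_0, A_1, …, A_{k−1}) be the kn×kn block λ-circulant matrix with these blocks. Then X·(X̄)^T = −I_{kn} if and only if Σ_{i=0}^{k−1} A_i·(Ā_i)^T = −I_n and, for every j ∈ {1,…,k−1}, Σ_{i=0}^{k−j−1} A_{[i+j]_k}·(Ā_i)^T + λ̄·Σ_{i=k−j}^{k−1} A_{[i+j]_k}·(Ā_i)^T = 0, where [m]_k denotes m mod k. -/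
import Mathlib


open Matrix

/-- The kn×kn block λ-circulant matrix with n×n blocks `A 0, …, A (k-1)`: its (r,s) block
is `A (s - r)` if `r ≤ s` and `λ • A (k + s - r)` otherwise. -/
def blockCirc {R : Type*} [CommRing R] (k n : ℕ) (l : R) (A : ℕ → Matrix (Fin n) (Fin n) R) :
    Matrix (Fin k × Fin n) (Fin k × Fin n) R :=
  Matrix.of fun p q =>
    if (p.1 : ℕ) ≤ (q.1 : ℕ) then A ((q.1 : ℕ) - p.1) p.2 q.2
    else l * A (k + q.1 - p.1) p.2 q.2

section Aux

variable {R : Type*} [CommRing R] {n : ℕ} (σ : R ≃+* R) (k : ℕ)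
  (A : ℕ → Matrix (Fin n) (Fin n) R) (l : R)

/-- entry of a block of `blockCirc`, as a function of natural-number block indices. -/
def bcG (r s : ℕ) : Matrix (Fin n) (Fin n) R :=
  if r ≤ s then A (s - r) else l • A (k + s - r)

/-- the blocks of the product `X * (X.map σ)ᵀ`. -/
def bcC (j : ℕ) : Matrix (Fin n) (Fin n) R :=
  (∑ i ∈ Finset.range (k - j), A ((i + j) % k) * ((A i).map σ)ᵀ)
    + σ l • ∑ i ∈ Finset.Ico (k - j) k, A ((i + j) % k) * ((A i).map σ)ᵀ

lemma mapSmul (c : R) (M : Matrix (Fin n) (Fin n) R) :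
    (c • M).map σ = σ c • M.map σ := by
  ext i j
  simp [Matrix.map_apply, smul_eq_mul, _root_.map_mul]

lemma bcKey (hl : l * σ l = 1) {r t : ℕ} (hr : r < k) (ht : t < k) :
    ∑ s ∈ Finset.range k, bcG k A l r s * ((bcG k A l t s).map σ)ᵀ
      = if r ≤ t then bcC σ k A l (t - r) else l • bcC σ k A l (k + t - r) := by
  rcases le_or_gt r t with h | h
  · rw [if_pos h]
    -- split the LHS into s < r, r ≤ s < t, t ≤ s
    rw [Finset.range_eq_Ico,
      ← Finset.sum_Ico_consecutive _ (Nat.zero_le t) (le_of_lt ht),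
      ← Finset.sum_Ico_consecutive _ (Nat.zero_le r) h]
    rw [bcC, Finset.range_eq_Ico,
      ← Finset.sum_Ico_consecutive _ (Nat.zero_le (k - t)) (show k - t ≤ k - (t - r) by omega)]
    have e3 : ∑ s ∈ Finset.Ico t k, bcG k A l r s * ((bcG k A l t s).map σ)ᵀ
        = ∑ i ∈ Finset.Ico 0 (k - t), A ((i + (t - r)) % k) * ((A i).map σ)ᵀ := by
      refine Finset.sum_nbij' (fun s => s - t) (fun i => i + t) ?_ ?_ ?_ ?_ ?_
      · intro a ha; simp only [Finset.mem_Ico] at ha ⊢; omega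
      · intro a ha; simp only [Finset.mem_Ico] at ha ⊢; omega
      · intro a ha; simp only [Finset.mem_Ico] at ha; beta_reduce; omega
      · intro a ha; simp only [Finset.mem_Ico] at ha; beta_reduce; omega
      · intro s hs
        simp only [Finset.mem_Ico] at hs
        beta_reduce
        simp only [bcG]
        rw [if_pos (show r ≤ s by omega), if_pos (show t ≤ s by omega),
          show (s - t + (t - r)) % k = s - r from by
            rw [Nat.mod_eq_of_lt (by omega)]; omega]
    have e1 : ∑ s ∈ Finset.Ico 0 r, bcG k A l r s * ((bcG k A l t s).map σ)ᵀ
        = ∑ i ∈ Finset.Ico (k - t) (k - (t - r)), A ((i + (t - r)) % k) * ((A i).map σ)ᵀ := by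
      refine Finset.sum_nbij' (fun s => k + s - t) (fun i => i + t - k) ?_ ?_ ?_ ?_ ?_
      · intro a ha; simp only [Finset.mem_Ico] at ha ⊢; omega
      · intro a ha; simp only [Finset.mem_Ico] at ha ⊢; omega
      · intro a ha; simp only [Finset.mem_Ico] at ha; beta_reduce; omega
      · intro a ha; simp only [Finset.mem_Ico] at ha; beta_reduce; omega
      · intro s hs
        simp only [Finset.mem_Ico] at hs
        beta_reduce
        simp only [bcG]
        rw [if_neg (show ¬ r ≤ s by omega), if_neg (show ¬ t ≤ s by omega),
          mapSmul, transpose_smul, smul_mul_assoc, mul_smul_comm, smul_smul, hl, one_smul,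
          show (k + s - t + (t - r)) % k = k + s - r from by
            rw [Nat.mod_eq_of_lt (by omega)]; omega]
    have e2 : ∑ s ∈ Finset.Ico r t, bcG k A l r s * ((bcG k A l t s).map σ)ᵀ
        = σ l • ∑ i ∈ Finset.Ico (k - (t - r)) k, A ((i + (t - r)) % k) * ((A i).map σ)ᵀ := by
      rw [Finset.smul_sum]
      refine Finset.sum_nbij' (fun s => k + s - t) (fun i => i + t - k) ?_ ?_ ?_ ?_ ?_
      · intro a ha; simp only [Finset.mem_Ico] at ha ⊢; omega
      · intro a ha; simp only [Finset.mem_Ico] at ha ⊢; omega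
      · intro a ha; simp only [Finset.mem_Ico] at ha; beta_reduce; omega
      · intro a ha; simp only [Finset.mem_Ico] at ha; beta_reduce; omega
      · intro s hs
        simp only [Finset.mem_Ico] at hs
        beta_reduce
        simp only [bcG]
        rw [if_pos (show r ≤ s by omega), if_neg (show ¬ t ≤ s by omega),
          mapSmul, transpose_smul, mul_smul_comm,
          show (k + s - t + (t - r)) % k = s - r from by
            rw [Nat.mod_eq_sub_mod (by omega), Nat.mod_eq_of_lt (by omega)]; omega]
    rw [e1, e2, e3]
    abel
  · rw [if_neg (by omega)]
    -- split the LHS into s < t, t ≤ s < r, r ≤ s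
    rw [Finset.range_eq_Ico,
      ← Finset.sum_Ico_consecutive _ (Nat.zero_le r) (le_of_lt hr),
      ← Finset.sum_Ico_consecutive _ (Nat.zero_le t) (le_of_lt h)]
    rw [bcC, smul_add, smul_smul, hl, one_smul, Finset.range_eq_Ico,
      ← Finset.sum_Ico_consecutive _
        (show k - (k + t - r) ≤ k - t by omega) (show k - t ≤ k by omega)]
    have e3 : ∑ s ∈ Finset.Ico r k, bcG k A l r s * ((bcG k A l t s).map σ)ᵀ
        = ∑ i ∈ Finset.Ico (k - (k + t - r)) (k - t),
            A ((i + (k + t - r)) % k) * ((A i).map σ)ᵀ := by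
      refine Finset.sum_nbij' (fun s => s - t) (fun i => i + t) ?_ ?_ ?_ ?_ ?_
      · intro a ha; simp only [Finset.mem_Ico] at ha ⊢; omega
      · intro a ha; simp only [Finset.mem_Ico] at ha ⊢; omega
      · intro a ha; simp only [Finset.mem_Ico] at ha; beta_reduce; omega
      · intro a ha; simp only [Finset.mem_Ico] at ha; beta_reduce; omega
      · intro s hs
        simp only [Finset.mem_Ico] at hs
        beta_reduce
        simp only [bcG]
        rw [if_pos (show r ≤ s by omega), if_pos (show t ≤ s by omega),
          show (s - t + (k + t - r)) % k = s - r from by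
            rw [Nat.mod_eq_sub_mod (by omega), Nat.mod_eq_of_lt (by omega)]; omega]
    have e1 : ∑ s ∈ Finset.Ico 0 t, bcG k A l r s * ((bcG k A l t s).map σ)ᵀ
        = ∑ i ∈ Finset.Ico (k - t) k, A ((i + (k + t - r)) % k) * ((A i).map σ)ᵀ := by
      refine Finset.sum_nbij' (fun s => k + s - t) (fun i => i + t - k) ?_ ?_ ?_ ?_ ?_
      · intro a ha; simp only [Finset.mem_Ico] at ha ⊢; omega
      · intro a ha; simp only [Finset.mem_Ico] at ha ⊢; omega
      · intro a ha; simp only [Finset.mem_Ico] at ha; beta_reduce; omega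
      · intro a ha; simp only [Finset.mem_Ico] at ha; beta_reduce; omega
      · intro s hs
        simp only [Finset.mem_Ico] at hs
        beta_reduce
        simp only [bcG]
        rw [if_neg (show ¬ r ≤ s by omega), if_neg (show ¬ t ≤ s by omega),
          mapSmul, transpose_smul, smul_mul_assoc, mul_smul_comm, smul_smul, hl, one_smul,
          show (k + s - t + (k + t - r)) % k = k + s - r from by
            rw [Nat.mod_eq_sub_mod (by omega), Nat.mod_eq_of_lt (by omega)]; omega]
    have e2 : ∑ s ∈ Finset.Ico t r, bcG k A l r s * ((bcG k A l t s).map σ)ᵀ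
        = l • ∑ i ∈ Finset.Ico 0 (k - (k + t - r)),
            A ((i + (k + t - r)) % k) * ((A i).map σ)ᵀ := by
      rw [Finset.smul_sum]
      refine Finset.sum_nbij' (fun s => s - t) (fun i => i + t) ?_ ?_ ?_ ?_ ?_
      · intro a ha; simp only [Finset.mem_Ico] at ha ⊢; omega
      · intro a ha; simp only [Finset.mem_Ico] at ha ⊢; omega
      · intro a ha; simp only [Finset.mem_Ico] at ha; beta_reduce; omega
      · intro a ha; simp only [Finset.mem_Ico] at ha; beta_reduce; omega
      · intro s hs
        simp only [Finset.mem_Ico] at hs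
        beta_reduce
        simp only [bcG]
        rw [if_neg (show ¬ r ≤ s by omega), if_pos (show t ≤ s by omega), smul_mul_assoc,
          show (s - t + (k + t - r)) % k = k + s - r from by
            rw [Nat.mod_eq_of_lt (by omega)]; omega]
    rw [e1, e2, e3]
    abel

lemma bcProd (hl : l * σ l = 1) :
    blockCirc k n l A * ((blockCirc k n l A).map σ)ᵀ = blockCirc k n l (bcC σ k A l) := by
  ext ⟨r, x⟩ ⟨t, y⟩
  have hkey := bcKey σ k A l hl r.isLt t.isLt
  have step1 : (blockCirc k n l A * ((blockCirc k n l A).map σ)ᵀ) (r, x) (t, y)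
      = ∑ s ∈ Finset.range k, (bcG k A l r s * ((bcG k A l t s).map σ)ᵀ) x y := by
    rw [Matrix.mul_apply, Fintype.sum_prod_type,
      ← Fin.sum_univ_eq_sum_range
        (fun s => (bcG k A l (r : ℕ) s * ((bcG k A l (t : ℕ) s).map σ)ᵀ) x y) k]
    refine Finset.sum_congr rfl fun s _ => ?_
    rw [Matrix.mul_apply]
    refine Finset.sum_congr rfl fun z _ => ?_
    simp only [blockCirc, bcG, Matrix.transpose_apply, Matrix.map_apply, Matrix.of_apply]
    rw [apply_ite (fun M : Matrix (Fin n) (Fin n) R => M x z),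
      apply_ite (fun M : Matrix (Fin n) (Fin n) R => M y z)]
    simp only [Matrix.smul_apply, smul_eq_mul]
  rw [step1, ← Matrix.sum_apply, hkey]
  simp only [blockCirc, Matrix.of_apply]
  by_cases hrt : (r : ℕ) ≤ (t : ℕ)
  · rw [if_pos hrt, if_pos hrt]
  · rw [if_neg hrt, if_neg hrt, Matrix.smul_apply, smul_eq_mul]

lemma bcEqNegOne (hk : 1 ≤ k) (C : ℕ → Matrix (Fin n) (Fin n) R) :
    blockCirc k n l C = -1 ↔ (C 0 = -1 ∧ ∀ j, 1 ≤ j → j < k → C j = 0) := by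
  constructor
  · intro h
    constructor
    · ext x y
      have := congrFun (congrFun h (⟨0, hk⟩, x)) (⟨0, hk⟩, y)
      simp only [blockCirc, Matrix.of_apply, Nat.le_refl, if_pos, Nat.sub_self] at this
      rw [this]
      by_cases hxy : x = y <;>
        simp [Matrix.neg_apply, Matrix.one_apply, hxy, Prod.ext_iff]
    · intro j hj hjk
      ext x y
      have := congrFun (congrFun h (⟨0, hk⟩, x)) (⟨j, hjk⟩, y)
      simp only [blockCirc, Matrix.of_apply, Nat.zero_le, if_pos, Nat.sub_zero] at this
      rw [Matrix.zero_apply, this, Matrix.neg_apply, Matrix.one_apply, if_neg, neg_zero]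
      intro hc
      have h2 : ((⟨0, hk⟩ : Fin k) : ℕ) = ((⟨j, hjk⟩ : Fin k) : ℕ) :=
        congrArg Fin.val (Prod.ext_iff.mp hc).1
      simp only [] at h2
      omega
  · rintro ⟨h0, hj⟩
    ext ⟨r, x⟩ ⟨t, y⟩
    simp only [blockCirc, Matrix.of_apply]
    by_cases hrt : (r : ℕ) ≤ (t : ℕ)
    · rw [if_pos hrt]
      by_cases heq : (r : ℕ) = (t : ℕ)
      · have hrt' : r = t := Fin.ext heq
        rw [heq, Nat.sub_self, h0]
        by_cases hxy : x = y <;>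
          simp [Matrix.neg_apply, Matrix.one_apply, hxy, hrt', Prod.ext_iff]
      · rw [hj ((t : ℕ) - r) (by omega) (by omega), Matrix.zero_apply,
          Matrix.neg_apply, Matrix.one_apply, if_neg, neg_zero]
        intro hc
        have h2 : (r : ℕ) = (t : ℕ) := congrArg Fin.val (Prod.ext_iff.mp hc).1
        omega
    · rw [if_neg hrt]
      rw [hj (k + (t : ℕ) - r) (by omega) (by have := r.isLt; have := t.isLt; omega),
        Matrix.zero_apply, mul_zero, Matrix.neg_apply, Matrix.one_apply, if_neg, neg_zero]
      intro hc
      have h2 : (r : ℕ) = (t : ℕ) := congrArg Fin.val (Prod.ext_iff.mp hc).1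
      omega

end Aux

theorem stmt11 {R : Type*} [CommRing R] (σ : R ≃+* R) (hσ : Function.Involutive σ)
    (n k : ℕ) (hn : 1 ≤ n) (hk : 1 ≤ k) (A : ℕ → Matrix (Fin n) (Fin n) R)
    (l : R) (hl : l * σ l = 1)
    (X : Matrix (Fin k × Fin n) (Fin k × Fin n) R) (hX : X = blockCirc k n l A) :
    X * (X.map σ)ᵀ = -1
      ↔ (∑ i ∈ Finset.range k, A i * ((A i).map σ)ᵀ = -1
          ∧ ∀ j, 1 ≤ j → j ≤ k - 1 →
              (∑ i ∈ Finset.range (k - j), A ((i + j) % k) * ((A i).map σ)ᵀ)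
                + σ l • ∑ i ∈ Finset.Ico (k - j) k, A ((i + j) % k) * ((A i).map σ)ᵀ = 0) := by
  subst hX
  rw [bcProd σ k A l hl, bcEqNegOne k l hk]
  have hC0 : bcC σ k A l 0 = ∑ i ∈ Finset.range k, A i * ((A i).map σ)ᵀ := by
    simp only [bcC, Nat.sub_zero, Finset.Ico_self, Finset.sum_empty, smul_zero, add_zero]
    refine Finset.sum_congr rfl fun i hi => ?_
    rw [Finset.mem_range] at hi
    rw [Nat.mod_eq_of_lt hi]
  have hCj : ∀ j, bcC σ k A l j
      = (∑ i ∈ Finset.range (k - j), A ((i + j) % k) * ((A i).map σ)ᵀ)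
        + σ l • ∑ i ∈ Finset.Ico (k - j) k, A ((i + j) % k) * ((A i).map σ)ᵀ := fun j => rfl
  constructor
  · rintro ⟨h0, hj⟩
    refine ⟨by rw [← hC0]; exact h0, fun j hj1 hj2 => ?_⟩
    rw [← hCj]
    exact hj j hj1 (by omega)
  · rintro ⟨h0, hj⟩
    refine ⟨by rw [hC0]; exact h0, fun j hj1 hj2 => ?_⟩
    rw [hCj]
    exact hj j hj1 (by omega)
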